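/- Define QBER(p) = 1 − (1 − 4p + 6p² − 4p³ + 28p⁴/27)/(1 − 4p + 8p² − 64p³/9 + 64p⁴/27) for p ∈ [0,1]. Then QBER(p) < 2p − p² for every p ∈ (0, 1/2), and QBER(1/2) = 3/4 = 2·(1/2) − (1/2)². (Hence the probability threshold of the two-logical-qubit error-detection scheme using two noisy EPR pairs, relative to the uncoded two-qubit error ratio 2p − p², is p_th = 1/2.) -/
import Mathlib


/-- The qubit error ratio of the two-logical-qubit error-detection scheme using two noisy
EPR pairs over quantum depolarizing channels with depolarizing probability `p`. -/
noncomputable def QBER (p : ℝ) : ℝ :=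
  1 - (1 - 4*p + 6*p^2 - 4*p^3 + 28*p^4/27) / (1 - 4*p + 8*p^2 - 64*p^3/9 + 64*p^4/27)

/-- `QBER(p) < 2p − p²` for every `p ∈ (0, 1/2)`, and `QBER(1/2) = 3/4 = 2·(1/2) − (1/2)²`;
hence the probability threshold of the two-logical-qubit error-detection scheme using two
noisy EPR pairs, relative to the uncoded two-qubit error ratio `2p − p²`, is `p_th = 1/2`. -/
theorem stmt13 :
    (∀ p ∈ Set.Ioo (0 : ℝ) (1/2), QBER p < 2*p - p^2) ∧
    QBER (1/2) = 3/4 ∧ (3/4 : ℝ) = 2*(1/2) - (1/2)^2 := by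
  refine ⟨?_, ?_, by norm_num⟩
  · intro p ⟨hp0, hp1⟩
    have hp1' : (0:ℝ) < 1 - 2*p := by linarith
    have hD : (0:ℝ) < 1 - 4*p + 8*p^2 - 64*p^3/9 + 64*p^4/27 := by
      nlinarith [sq_nonneg (1 - 2*p), sq_nonneg p, mul_pos hp0 hp1',
        mul_pos (mul_pos hp0 hp0) hp1', sq_nonneg (p*(1-2*p)), sq_nonneg (1-4*p)]
    have key : 1 - 2*p + p^2 <
        (1 - 4*p + 6*p^2 - 4*p^3 + 28*p^4/27) / (1 - 4*p + 8*p^2 - 64*p^3/9 + 64*p^4/27) := by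
      rw [lt_div_iff₀ hD]
      nlinarith [mul_pos hp0 hp1', mul_pos (mul_pos hp0 hp1') hp0,
        mul_pos (mul_pos (mul_pos hp0 hp1') hp0) hp0,
        mul_pos (mul_pos (mul_pos (mul_pos hp0 hp1') hp0) hp0) hp0,
        mul_pos (mul_pos hp0 hp1') hp1', sq_nonneg (p*(1-2*p))]
    unfold QBER
    linarith
  · unfold QBER
    norm_num
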